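/- (Hopf-type lemma) Let c > 0, T_M > 0 and f ∈ C²(ℝ_+) ∩ C_b(ℝ_+) with 0 ≤ f ≤ T_M solve f'' − c f' − f⁴ + ∫_0^∞ E(y−η)f⁴(η)dη = 0 on (0,∞) with f(0) = T_M. Then f(y) < T_M for all y > 0 and ∂_y f(0⁺) < 0. -/

import Mathlib

open MeasureTheory

/-- The normalized exponential integral kernel E(x) = (1/2)·∫_{|x|}^∞ e^{-t}/t dt. -/
noncomputable def Ek (x : ℝ) : ℝ := (1 / 2) * ∫ t in Set.Ioi |x|, Real.exp (-t) / t

open Set Real Filter Topology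

lemma gmeas : Measurable (fun t : ℝ => Real.exp (-t) / t) :=
  (Real.measurable_exp.comp measurable_neg).div measurable_id

lemma gintOn {a : ℝ} (ha : 0 < a) : IntegrableOn (fun t : ℝ => Real.exp (-t) / t) (Set.Ioi a) := by
  have h1 : IntegrableOn (fun t : ℝ => Real.exp (-t) / a) (Set.Ioi a) := by
    simpa [div_eq_mul_inv, IntegrableOn] using
      ((exp_neg_integrableOn_Ioi a zero_lt_one).mul_const a⁻¹).congr
        (ae_of_all _ (fun x => by simp))
  refine Integrable.mono h1 (gmeas.aestronglyMeasurable.restrict) ?_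
  filter_upwards [ae_restrict_mem measurableSet_Ioi] with t ht
  have ht0 : 0 < t := lt_trans ha ht
  rw [norm_div, norm_div]
  apply div_le_div_of_nonneg_left ?_ ?_ ?_ <;>
    simp [abs_of_pos, ht0, ha, (Real.exp_pos _).le, le_of_lt (Set.mem_Ioi.1 ht), (Set.mem_Ioi.1 ht).le]

lemma Ek_nonneg (x : ℝ) : 0 ≤ Ek x := by
  have : 0 ≤ ∫ t in Set.Ioi |x|, Real.exp (-t) / t := by
    apply setIntegral_nonneg measurableSet_Ioi
    intro t ht
    have : 0 < t := lt_of_le_of_lt (abs_nonneg x) ht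
    positivity
  unfold Ek; linarith

lemma Ek_pos {x : ℝ} (hx : x ≠ 0) : 0 < Ek x := by
  have hax : 0 < |x| := abs_pos.2 hx
  have hpos : ∀ t ∈ Set.Ioi |x|, 0 < Real.exp (-t) / t := by
    intro t ht
    have : 0 < t := lt_trans hax ht
    positivity
  rw [Ek]
  have : 0 < ∫ t in Set.Ioi |x|, Real.exp (-t) / t := by
    rw [setIntegral_pos_iff_support_of_nonneg_ae]
    · have : (Function.support fun t => Real.exp (-t) / t) ∩ Set.Ioi |x| = Set.Ioi |x| := by
        apply Set.inter_eq_right.2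
        intro t ht
        exact (hpos t ht).ne'
      rw [this]; simp
    · filter_upwards [ae_restrict_mem measurableSet_Ioi] with t ht using (hpos t ht).le
    · exact gintOn hax
  linarith

noncomputable def Fk : ℝ × ℝ → ℝ := fun p => Set.indicator {q : ℝ × ℝ | |q.1| < q.2} (fun q => Real.exp (-q.2) / q.2) p

lemma Fk_sm : MeasureTheory.StronglyMeasurable Fk := by
  apply Measurable.stronglyMeasurable
  exact (gmeas.comp measurable_snd).indicator
    (measurableSet_lt ((_root_.continuous_abs.measurable).comp measurable_fst) measurable_snd)

lemma Fk_int (x : ℝ) : (∫ t, Fk (x, t)) = 2 * Ek x := by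
  have h1 : (fun t => Fk (x, t)) = (Set.Ioi |x|).indicator (fun t => Real.exp (-t) / t) := by
    ext t
    simp only [Fk, Set.indicator_apply, Set.mem_setOf_eq, Set.mem_Ioi]
  rw [h1, integral_indicator measurableSet_Ioi, Ek]
  ring

lemma Fk_nonneg (p : ℝ × ℝ) : 0 ≤ Fk p := by
  rw [Fk, Set.indicator_apply]
  split
  · next h =>
      have : 0 < p.2 := lt_of_le_of_lt (abs_nonneg _) h
      positivity
  · exact le_refl _

lemma Ek_sm : MeasureTheory.StronglyMeasurable Ek := by
  have h := Fk_sm.integral_prod_right' (ν := (volume : Measure ℝ))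
  have : Ek = fun x => (1/2 : ℝ) * ∫ t, Fk (x, t) := by
    ext x; rw [Fk_int]; ring
  rw [this]
  exact (stronglyMeasurable_const.mul h)

lemma lint_Ek : (∫⁻ x, ENNReal.ofReal (Ek x)) = 1 := by
  have hφm : Measurable (fun p : ℝ × ℝ => ENNReal.ofReal (Fk p)) :=
    ENNReal.measurable_ofReal.comp Fk_sm.measurable
  -- swap
  have hswap : (∫⁻ x, ∫⁻ t, ENNReal.ofReal (Fk (x, t))) = ∫⁻ t, ∫⁻ x, ENNReal.ofReal (Fk (x, t)) :=
    lintegral_lintegral_swap hφm.aemeasurable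
  -- inner in t for x ≠ 0
  have hx : ∀ x : ℝ, x ≠ 0 → (∫⁻ t, ENNReal.ofReal (Fk (x, t))) = ENNReal.ofReal (2 * Ek x) := by
    intro x hx0
    have hax : 0 < |x| := abs_pos.2 hx0
    have h1 : (fun t => Fk (x, t)) = (Set.Ioi |x|).indicator (fun t => Real.exp (-t) / t) := by
      ext t; simp only [Fk, Set.indicator_apply, Set.mem_setOf_eq, Set.mem_Ioi]
    have hint : Integrable (fun t => Fk (x, t)) := by
      rw [h1, integrable_indicator_iff measurableSet_Ioi]
      exact gintOn hax
    rw [← ofReal_integral_eq_lintegral_ofReal hint (ae_of_all _ (fun t => Fk_nonneg (x, t))), Fk_int]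
  -- inner in x for fixed t
  have ht : ∀ t : ℝ, (∫⁻ x, ENNReal.ofReal (Fk (x, t))) =
      (Set.Ioi (0:ℝ)).indicator (fun t => ENNReal.ofReal (2 * Real.exp (-t))) t := by
    intro t
    have h2 : (fun x => ENNReal.ofReal (Fk (x, t))) =
        (Set.Ioo (-t) t).indicator (fun _ => ENNReal.ofReal (Real.exp (-t) / t)) := by
      ext x
      simp only [Fk, Set.indicator_apply, Set.mem_setOf_eq, Set.mem_Ioo, ← abs_lt, Set.mem_Ioi]
      split <;> simp
    rw [h2, lintegral_indicator measurableSet_Ioo, setLIntegral_const, Real.volume_Ioo]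
    rcases le_or_gt t 0 with h | h
    · rw [Set.indicator_of_notMem (by simpa using h),
        ENNReal.ofReal_eq_zero.2 (by linarith : t - -t ≤ 0), mul_zero]
    · have hgt : (0:ℝ) ≤ Real.exp (-t) / t := by positivity
      rw [Set.indicator_of_mem (Set.mem_Ioi.2 h), ← ENNReal.ofReal_mul hgt]
      congr 1
      field_simp
      ring
  calc (∫⁻ x, ENNReal.ofReal (Ek x))
      = (∫⁻ x, 2⁻¹ * ENNReal.ofReal (2 * Ek x)) := by
        apply lintegral_congr_ae
        filter_upwards [] with x
        rw [ENNReal.ofReal_mul (by norm_num : (0:ℝ) ≤ 2)]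
        rw [← mul_assoc, ENNReal.ofReal_ofNat]
        norm_num [ENNReal.inv_mul_cancel]
    _ = 2⁻¹ * ∫⁻ x, ENNReal.ofReal (2 * Ek x) := lintegral_const_mul _ (by
        exact ENNReal.measurable_ofReal.comp ((Ek_sm.measurable).const_mul 2))
    _ = 2⁻¹ * ∫⁻ x, ∫⁻ t, ENNReal.ofReal (Fk (x, t)) := by
        congr 1
        apply lintegral_congr_ae
        have h0 : ({(0:ℝ)}ᶜ : Set ℝ) ∈ ae volume := by
          rw [compl_mem_ae_iff]; exact measure_singleton 0
        filter_upwards [h0] with x hx0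
        exact (hx x hx0).symm
    _ = 2⁻¹ * ∫⁻ t, ∫⁻ x, ENNReal.ofReal (Fk (x, t)) := by rw [hswap]
    _ = 2⁻¹ * ∫⁻ t in Set.Ioi 0, ENNReal.ofReal (2 * Real.exp (-t)) := by
        congr 1
        rw [← lintegral_indicator measurableSet_Ioi]
        exact lintegral_congr (fun t => ht t)
    _ = 1 := by
        rw [← ofReal_integral_eq_lintegral_ofReal
          (((exp_neg_integrableOn_Ioi 0 zero_lt_one).congr
            (ae_of_all _ (fun x => by simp))).const_mul 2)
          (ae_of_all _ (fun t => by positivity))]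
        have : (∫ t in Set.Ioi (0:ℝ), 2 * Real.exp (-t)) = 2 := by
          rw [MeasureTheory.integral_const_mul, integral_exp_neg_Ioi_zero]; ring
        rw [this]
        rw [ENNReal.ofReal_ofNat]
        norm_num [ENNReal.inv_mul_cancel]

lemma Ek_integrable : Integrable Ek := by
  refine ⟨Ek_sm.aestronglyMeasurable, ?_⟩
  rw [hasFiniteIntegral_iff_ofReal (ae_of_all _ Ek_nonneg), lint_Ek]
  norm_num

lemma Ek_integral : (∫ x, Ek x) = 1 := by
  rw [integral_eq_lintegral_of_nonneg_ae (ae_of_all _ Ek_nonneg) Ek_sm.aestronglyMeasurable,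
    lint_Ek]
  norm_num

lemma Ek_shift_integrable (y : ℝ) : Integrable (fun η => Ek (y - η)) :=
  Ek_integrable.comp_sub_left y

lemma J_lt_one {y : ℝ} (hy : 0 < y) : (∫ η in Set.Ioi (0:ℝ), Ek (y - η)) < 1 := by
  have hint : Integrable (fun η => Ek (y - η)) := Ek_shift_integrable y
  have htot : (∫ η, Ek (y - η)) = 1 := by
    rw [integral_sub_left_eq_self Ek volume y, Ek_integral]
  have hsplit : (∫ η in Set.Ioi (0:ℝ), Ek (y - η)) + (∫ η in Set.Iic (0:ℝ), Ek (y - η)) = 1 := by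
    rw [← Set.compl_Ioi, integral_add_compl measurableSet_Ioi hint, htot]
  have hpos : 0 < ∫ η in Set.Iic (0:ℝ), Ek (y - η) := by
    rw [setIntegral_pos_iff_support_of_nonneg_ae
      (ae_of_all _ (fun η => Ek_nonneg _)) (hint.integrableOn)]
    have hsub : Set.Iic (0:ℝ) ⊆ (Function.support fun η => Ek (y - η)) ∩ Set.Iic 0 := by
      intro η hη
      refine ⟨?_, hη⟩
      have hne : y - η ≠ 0 := by
        have : (η : ℝ) ≤ 0 := hη
        intro h; linarith [sub_eq_zero.1 h]
      exact Function.mem_support.2 (Ek_pos hne).ne'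
    calc (0:ENNReal) < volume (Set.Iic (0:ℝ)) := by simp
      _ ≤ _ := measure_mono hsub
  linarith

lemma second_deriv_test_min {g : ℝ → ℝ} {x : ℝ}
    (h1 : ∀ᶠ y in nhds x, DifferentiableAt ℝ g y)
    (h2 : DifferentiableAt ℝ (deriv g) x) (hmin : IsLocalMin g x) :
    0 ≤ deriv (deriv g) x := by
  by_contra hcon
  push_neg at hcon
  have h0 : deriv g x = 0 := hmin.deriv_eq_zero
  have hd : Tendsto (slope (deriv g) x) (𝓝[≠] x) (𝓝 (deriv (deriv g) x)) :=
    hasDerivAt_iff_tendsto_slope.1 h2.hasDerivAt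
  have hs : ∀ᶠ y in 𝓝[≠] x, slope (deriv g) x y < 0 := hd (Iio_mem_nhds hcon)
  have hs' : ∀ᶠ y in 𝓝[>] x, deriv g y < 0 := by
    have hmono : 𝓝[>] x ≤ 𝓝[≠] x :=
      nhdsWithin_mono x (fun y hy => ne_of_gt hy)
    filter_upwards [hmono hs, self_mem_nhdsWithin] with y hy hy'
    have hyx : 0 < y - x := sub_pos.2 hy'
    have : slope (deriv g) x y = deriv g y / (y - x) := by
      rw [slope_def_field, h0]; ring
    rw [this] at hy
    have := mul_neg_of_neg_of_pos hy hyx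
    rwa [div_mul_cancel₀ _ (ne_of_gt hyx)] at this
  have hev : ∀ᶠ y in 𝓝[>] x,
      deriv g y < 0 ∧ (DifferentiableAt ℝ g y ∧ g x ≤ g y) :=
    hs'.and ((h1.and hmin).filter_mono nhdsWithin_le_nhds)
  obtain ⟨b, hb, hP⟩ := (nhdsGT_basis x).eventually_iff.mp hev
  set m := (x + b) / 2 with hm
  have hxm : x < m := by simp [hm]; linarith
  have hmb : m < b := by simp [hm]; linarith
  have hanti : StrictAntiOn g (Set.Icc x m) := by
    apply strictAntiOn_of_deriv_neg (convex_Icc x m)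
    · intro y hy
      rcases eq_or_lt_of_le hy.1 with h | h
      · exact (h ▸ (h1.self_of_nhds)).continuousAt.continuousWithinAt
      · exact ((hP ⟨h, lt_of_le_of_lt hy.2 hmb⟩).2.1).continuousAt.continuousWithinAt
    · intro y hy
      rw [interior_Icc] at hy
      exact (hP ⟨hy.1, lt_trans hy.2 hmb⟩).1
  have h1' : g m < g x :=
    hanti (Set.left_mem_Icc.2 hxm.le) (Set.right_mem_Icc.2 hxm.le) hxm
  have h2' : g x ≤ g m := (hP ⟨hxm, hmb⟩).2.2
  linarith

lemma second_deriv_test_max {g : ℝ → ℝ} {x : ℝ}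
    (h1 : ∀ᶠ y in nhds x, DifferentiableAt ℝ g y)
    (h2 : DifferentiableAt ℝ (deriv g) x) (hmax : IsLocalMax g x) :
    deriv (deriv g) x ≤ 0 := by
  have e1 : (deriv fun y => -g y) = fun y => -deriv g y := funext fun y => deriv.neg
  have h1' : ∀ᶠ y in nhds x, DifferentiableAt ℝ (fun y => -g y) y :=
    h1.mono fun y hy => hy.neg
  have h2' : DifferentiableAt ℝ (deriv fun y => -g y) x := by
    rw [e1]; exact h2.neg
  have := second_deriv_test_min h1' h2' hmax.neg
  rw [e1] at this
  have e2 : deriv (fun y => -deriv g y) x = -deriv (deriv g) x := deriv.neg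
  rw [e2] at this
  linarith

lemma I_bound {T_M : ℝ} (hTM : 0 ≤ T_M) {f : ℝ → ℝ}
    (hb : ∀ y ∈ Set.Ici (0:ℝ), 0 ≤ f y ∧ f y ≤ T_M) (y : ℝ) :
    (∫ η in Set.Ioi (0:ℝ), Ek (y - η) * (f η) ^ 4) ≤
      T_M ^ 4 * ∫ η in Set.Ioi (0:ℝ), Ek (y - η) := by
  have hdom : IntegrableOn (fun η => T_M ^ 4 * Ek (y - η)) (Set.Ioi 0) :=
    ((Ek_shift_integrable y).const_mul _).integrableOn
  have h := integral_mono_of_nonneg (μ := volume.restrict (Set.Ioi 0))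
    (f := fun η => Ek (y - η) * (f η) ^ 4) (g := fun η => T_M ^ 4 * Ek (y - η))
    ?_ hdom ?_
  · calc (∫ η in Set.Ioi (0:ℝ), Ek (y - η) * (f η) ^ 4)
        ≤ ∫ η in Set.Ioi (0:ℝ), T_M ^ 4 * Ek (y - η) := h
      _ = T_M ^ 4 * ∫ η in Set.Ioi (0:ℝ), Ek (y - η) := by
          rw [integral_const_mul]
  · exact ae_of_all _ fun η => mul_nonneg (Ek_nonneg _) (by positivity)
  · filter_upwards [ae_restrict_mem measurableSet_Ioi] with η hη
    have h0 : 0 ≤ f η := (hb η (Set.Ioi_subset_Ici_self hη)).1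
    have h1 : f η ≤ T_M := (hb η (Set.Ioi_subset_Ici_self hη)).2
    calc Ek (y - η) * (f η) ^ 4 ≤ Ek (y - η) * T_M ^ 4 :=
          mul_le_mul_of_nonneg_left (pow_le_pow_left₀ h0 h1 4) (Ek_nonneg _)
      _ = T_M ^ 4 * Ek (y - η) := mul_comm _ _

lemma J_nonneg (y : ℝ) : 0 ≤ ∫ η in Set.Ioi (0:ℝ), Ek (y - η) :=
  setIntegral_nonneg measurableSet_Ioi fun η _ => Ek_nonneg _

/-- Hopf-type lemma: a bounded solution of the non-local equation with
f(0) = T_M satisfies f < T_M on (0,∞) and ∂_y f(0⁺) < 0. -/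
theorem stmt13 (c T_M : ℝ) (hc : 0 < c) (hTM : 0 < T_M) (f : ℝ → ℝ)
    (hf : ContDiffOn ℝ 2 f (Set.Ici 0))
    (hb : ∀ y ∈ Set.Ici (0 : ℝ), 0 ≤ f y ∧ f y ≤ T_M)
    (hf0 : f 0 = T_M)
    (heq : ∀ y ∈ Set.Ioi (0 : ℝ),
      deriv (deriv f) y - c * deriv f y - (f y) ^ 4 +
        (∫ η in Set.Ioi (0 : ℝ), Ek (y - η) * (f η) ^ 4) = 0) :
    (∀ y ∈ Set.Ioi (0 : ℝ), f y < T_M) ∧ derivWithin f (Set.Ici 0) 0 < 0 := by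
  -- smoothness facts on the open half line
  have hfO : ContDiffOn ℝ 2 f (Set.Ioi 0) := hf.mono Set.Ioi_subset_Ici_self
  have hdiff : ∀ z ∈ Set.Ioi (0:ℝ), DifferentiableAt ℝ f z := fun z hz =>
    (hfO.contDiffAt (isOpen_Ioi.mem_nhds hz)).differentiableAt (by norm_num)
  have hd1 : ContDiffOn ℝ 1 (deriv f) (Set.Ioi 0) :=
    hfO.deriv_of_isOpen isOpen_Ioi (by norm_num)
  have hderivdiff : ∀ z ∈ Set.Ioi (0:ℝ), DifferentiableAt ℝ (deriv f) z := fun z hz =>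
    (hd1.contDiffAt (isOpen_Ioi.mem_nhds hz)).differentiableAt (by norm_num)
  -- Part 1
  have part1 : ∀ y ∈ Set.Ioi (0:ℝ), f y < T_M := by
    intro y hy
    by_contra hcon
    push_neg at hcon
    have hfy : f y = T_M := le_antisymm (hb y (Set.Ioi_subset_Ici_self hy)).2 hcon
    have hIoi : Set.Ioi (0:ℝ) ∈ nhds y := Ioi_mem_nhds hy
    have hmax : IsLocalMax f y := by
      filter_upwards [Filter.mem_of_superset hIoi Set.Ioi_subset_Ici_self] with z hz
      rw [hfy]; exact (hb z hz).2
    have h1 : ∀ᶠ z in nhds y, DifferentiableAt ℝ f z := by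
      filter_upwards [hIoi] with z hz using hdiff z hz
    have hsd : deriv (deriv f) y ≤ 0 := second_deriv_test_max h1 (hderivdiff y hy) hmax
    have hd0 : deriv f y = 0 := hmax.deriv_eq_zero
    have he := heq y hy
    rw [hd0, hfy] at he
    have hI : T_M ^ 4 ≤ ∫ η in Set.Ioi (0:ℝ), Ek (y - η) * (f η) ^ 4 := by linarith
    have hI2 := I_bound hTM.le hb y
    have hJ := J_lt_one hy
    nlinarith [pow_pos hTM 4]
  refine ⟨part1, ?_⟩
  -- Part 2
  set K : ℝ := 4 * T_M ^ 3 with hK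
  have hK0 : 0 < K := by positivity
  set α : ℝ := c + K + 1 with hα
  have hα1 : 1 ≤ α := by linarith
  have hα0 : 0 < α := by linarith
  have hf1 : f 1 < T_M := part1 1 (by norm_num)
  have hexpα : 1 < Real.exp α := by
    rw [← Real.exp_zero]; exact Real.exp_lt_exp.2 hα0
  set ε : ℝ := (T_M - f 1) / (Real.exp α - 1) with hε
  have hε0 : 0 < ε := div_pos (by linarith) (by linarith)
  set F : ℝ → ℝ := fun y => T_M - ε * (Real.exp (α * y) - 1) - f y with hF
  have hg1 : ∀ y : ℝ, HasDerivAt (fun z => T_M - ε * (Real.exp (α * z) - 1))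
      (-(ε * α * Real.exp (α * y))) y := by
    intro y
    have hlin : HasDerivAt (fun z : ℝ => α * z) α y := by
      simpa using (hasDerivAt_id y).const_mul α
    have hexp : HasDerivAt (fun z => Real.exp (α * z)) (Real.exp (α * y) * α) y := hlin.exp
    have := ((hexp.sub_const 1).const_mul ε).const_sub T_M
    refine this.congr_deriv ?_
    ring
  have hg2 : ∀ y : ℝ, HasDerivAt (fun z => -(ε * α * Real.exp (α * z)))
      (-(ε * α * α * Real.exp (α * y))) y := by
    intro y
    have hlin : HasDerivAt (fun z : ℝ => α * z) α y := by
      simpa using (hasDerivAt_id y).const_mul α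
    have hexp : HasDerivAt (fun z => Real.exp (α * z)) (Real.exp (α * y) * α) y := hlin.exp
    have := (hexp.const_mul (ε * α)).neg
    refine this.congr_deriv ?_
    ring
  have hFderiv : ∀ z ∈ Set.Ioi (0:ℝ), HasDerivAt F (-(ε * α * Real.exp (α * z)) - deriv f z) z :=
    fun z hz => (hg1 z).sub (hdiff z hz).hasDerivAt
  -- F ≥ 0 on [0,1]
  have hF0 : F 0 = 0 := by simp [hF, hf0]
  have hF1 : F 1 = 0 := by
    have : ε * (Real.exp α - 1) = T_M - f 1 := by
      rw [hε, div_mul_cancel₀]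
      intro h; rw [sub_eq_zero] at h; rw [← h] at hexpα; linarith
    simp only [hF, mul_one]
    linarith
  have hFcont : ContinuousOn F (Set.Icc 0 1) := by
    apply ContinuousOn.sub
    · exact (continuous_const.sub (continuous_const.mul
        ((Real.continuous_exp.comp (continuous_const.mul continuous_id)).sub
          continuous_const))).continuousOn
    · exact (hf.continuousOn).mono (fun z hz => le_trans (by norm_num) hz.1 : Set.Icc (0:ℝ) 1 ⊆ Set.Ici 0)
  obtain ⟨ys, hysmem, hysmin⟩ :=
    isCompact_Icc.exists_isMinOn (Set.nonempty_Icc.2 (by norm_num)) hFcont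
  have hFnn : ∀ y ∈ Set.Icc (0:ℝ) 1, 0 ≤ F y := by
    by_contra hcon
    push_neg at hcon
    obtain ⟨y0, hy0, hy0neg⟩ := hcon
    have hysneg : F ys < 0 := lt_of_le_of_lt (hysmin hy0) hy0neg
    have hys0 : ys ≠ 0 := fun h => by rw [h, hF0] at hysneg; linarith
    have hys1 : ys ≠ 1 := fun h => by rw [h, hF1] at hysneg; linarith
    have hysIoo : ys ∈ Set.Ioo (0:ℝ) 1 :=
      ⟨lt_of_le_of_ne hysmem.1 (Ne.symm hys0), lt_of_le_of_ne hysmem.2 hys1⟩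
    have hyspos : (0:ℝ) < ys := hysIoo.1
    have hIoo : Set.Ioo (0:ℝ) 1 ∈ nhds ys := isOpen_Ioo.mem_nhds hysIoo
    have hmin : IsLocalMin F ys := by
      filter_upwards [Filter.mem_of_superset hIoo Set.Ioo_subset_Icc_self] with z hz
      exact hysmin hz
    have h1 : ∀ᶠ z in nhds ys, DifferentiableAt ℝ F z := by
      filter_upwards [Ioi_mem_nhds hyspos] with z hz
      exact (hFderiv z hz).differentiableAt
    have hEqev : deriv F =ᶠ[nhds ys] fun z => -(ε * α * Real.exp (α * z)) - deriv f z := by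
      filter_upwards [Ioi_mem_nhds hyspos] with z hz
      exact (hFderiv z hz).deriv
    have hRHSdiff : DifferentiableAt ℝ (fun z => -(ε * α * Real.exp (α * z)) - deriv f z) ys :=
      (hg2 ys).differentiableAt.sub (hderivdiff ys hyspos)
    have h2 : DifferentiableAt ℝ (deriv F) ys := hEqev.symm.differentiableAt_iff.1 hRHSdiff
    have hDF : deriv F ys = -(ε * α * Real.exp (α * ys)) - deriv f ys := hEqev.self_of_nhds
    have hDDF : deriv (deriv F) ys = -(ε * α * α * Real.exp (α * ys)) - deriv (deriv f) ys := by
      rw [hEqev.deriv_eq]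
      rw [deriv_fun_sub (hg2 ys).differentiableAt (hderivdiff ys hyspos), (hg2 ys).deriv]
    have hd0 : deriv F ys = 0 := hmin.deriv_eq_zero
    have hsd : 0 ≤ deriv (deriv F) ys := second_deriv_test_min h1 h2 hmin
    rw [hDDF] at hsd
    have hderivfys : deriv f ys = -(ε * α * Real.exp (α * ys)) := by
      rw [hDF] at hd0; linarith
    have he := heq ys hyspos
    have hI2 := I_bound hTM.le hb ys
    have hJle : (∫ η in Set.Ioi (0:ℝ), Ek (ys - η)) ≤ 1 := (J_lt_one hyspos).le
    have hIle : (∫ η in Set.Ioi (0:ℝ), Ek (ys - η) * (f η) ^ 4) ≤ T_M ^ 4 := by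
      calc (∫ η in Set.Ioi (0:ℝ), Ek (ys - η) * (f η) ^ 4)
          ≤ T_M ^ 4 * ∫ η in Set.Ioi (0:ℝ), Ek (ys - η) := hI2
        _ ≤ T_M ^ 4 * 1 := by
            apply mul_le_mul_of_nonneg_left hJle (by positivity)
        _ = T_M ^ 4 := mul_one _
    -- bounds on f ys
    have hfb := hb ys hyspos.le
    have hTf : T_M ^ 4 - (f ys) ^ 4 ≤ K * (T_M - f ys) := by
      obtain ⟨h0, h1⟩ := hfb
      have e1 : (f ys) ^ 3 ≤ T_M ^ 3 := pow_le_pow_left₀ h0 h1 3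
      have e2 : T_M * (f ys) ^ 2 ≤ T_M * T_M ^ 2 :=
        mul_le_mul_of_nonneg_left (pow_le_pow_left₀ h0 h1 2) hTM.le
      have e3 : T_M ^ 2 * f ys ≤ T_M ^ 2 * T_M := mul_le_mul_of_nonneg_left h1 (by positivity)
      calc T_M ^ 4 - (f ys) ^ 4
          = (T_M - f ys) * (T_M ^ 3 + T_M ^ 2 * f ys + T_M * (f ys) ^ 2 + (f ys) ^ 3) := by ring
        _ ≤ (T_M - f ys) * (4 * T_M ^ 3) := by
            apply mul_le_mul_of_nonneg_left _ (by linarith)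
            nlinarith
        _ = K * (T_M - f ys) := by rw [hK]; ring
    have hTfF : T_M - f ys < ε * Real.exp (α * ys) := by
      have : F ys = T_M - ε * (Real.exp (α * ys) - 1) - f ys := rfl
      nlinarith
    have hepos : 0 < Real.exp (α * ys) := Real.exp_pos _
    -- equation: deriv (deriv f) ys = c * deriv f ys + (f ys)^4 - I
    have hddf : deriv (deriv f) ys =
        c * deriv f ys + (f ys) ^ 4 - ∫ η in Set.Ioi (0:ℝ), Ek (ys - η) * (f η) ^ 4 := by
      linarith
    rw [hddf, hderivfys] at hsd
    set E : ℝ := Real.exp (α * ys) with hE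
    have hepos : 0 < E := Real.exp_pos _
    have hεE : 0 < ε * E := mul_pos hε0 hepos
    set I : ℝ := ∫ η in Set.Ioi (0:ℝ), Ek (ys - η) * (f η) ^ 4 with hIdef
    have l1 : ε * α * α * E ≤ c * (ε * α * E) + (I - (f ys) ^ 4) := by linarith
    have l4 : K * (T_M - f ys) < K * (ε * E) := mul_lt_mul_of_pos_left hTfF hK0
    have l5 : ε * α * α * E < c * (ε * α * E) + K * (ε * E) := by linarith
    have e1 : ε * α * α * E = (α * α) * (ε * E) := by ring
    have e2 : c * (ε * α * E) + K * (ε * E) = (c * α + K) * (ε * E) := by ring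
    rw [e1, e2] at l5
    have hdiv : α * α < c * α + K := lt_of_mul_lt_mul_right l5 hεE.le
    have hαα : α * α = c * α + (K + 1) * α := by rw [hα]; ring
    have : (K + 1) * 1 ≤ (K + 1) * α := mul_le_mul_of_nonneg_left hα1 (by linarith)
    linarith
  -- derivative at 0
  have hdw : DifferentiableWithinAt ℝ f (Set.Ici 0) 0 :=
    (hf.differentiableOn (by norm_num)) 0 Set.self_mem_Ici
  have hhd : HasDerivWithinAt f (derivWithin f (Set.Ici 0) 0) (Set.Ici 0) 0 :=
    hdw.hasDerivWithinAt
  have hslope : Filter.Tendsto (slope f 0) (nhdsWithin 0 (Set.Ici 0 \ {0}))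
      (nhds (derivWithin f (Set.Ici 0) 0)) := hasDerivWithinAt_iff_tendsto_slope.1 hhd
  have hset : Set.Ici (0:ℝ) \ {0} = Set.Ioi 0 := by
    ext z
    simp only [Set.mem_diff, Set.mem_Ici, Set.mem_singleton_iff, Set.mem_Ioi]
    constructor
    · rintro ⟨h1, h2⟩; exact lt_of_le_of_ne h1 (Ne.symm h2)
    · intro h; exact ⟨h.le, h.ne'⟩
  rw [hset] at hslope
  have hslope' : Filter.Tendsto (slope f 0) (nhdsWithin 0 (Set.Ioc 0 1))
      (nhds (derivWithin f (Set.Ici 0) 0)) :=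
    hslope.mono_left (nhdsWithin_mono 0 Set.Ioc_subset_Ioi_self)
  -- barrier slope tendsto
  have hbar : HasDerivAt (fun y : ℝ => -(ε * (Real.exp (α * y) - 1))) (-(ε * α)) 0 := by
    have hlin : HasDerivAt (fun z : ℝ => α * z) α 0 := by
      simpa using (hasDerivAt_id (0:ℝ)).const_mul α
    have hexp : HasDerivAt (fun z => Real.exp (α * z)) (Real.exp (α * 0) * α) 0 := hlin.exp
    have := ((hexp.sub_const 1).const_mul ε).neg
    refine this.congr_deriv ?_
    simp
  have hbar' : Filter.Tendsto (slope (fun y : ℝ => -(ε * (Real.exp (α * y) - 1))) 0)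
      (nhdsWithin 0 (Set.Ioc 0 1)) (nhds (-(ε * α))) :=
    (hasDerivAt_iff_tendsto_slope.1 hbar).mono_left
      (nhdsWithin_mono 0 (fun z hz => Set.mem_compl_singleton_iff.2 hz.1.ne'))
  haveI : (nhdsWithin (0:ℝ) (Set.Ioc 0 1)).NeBot := by
    rw [nhdsWithin_Ioc_eq_nhdsGT (by norm_num : (0:ℝ) < 1)]
    infer_instance
  have hle : derivWithin f (Set.Ici 0) 0 ≤ -(ε * α) := by
    refine le_of_tendsto_of_tendsto hslope' hbar' ?_
    filter_upwards [self_mem_nhdsWithin] with y hy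
    have hy0 : 0 < y := hy.1
    have hFy : 0 ≤ F y := hFnn y ⟨hy0.le, hy.2⟩
    have hnum : f y - f 0 ≤ -(ε * (Real.exp (α * y) - 1)) - 0 := by
      simp only [hF] at hFy
      rw [hf0]
      linarith
    rw [slope_def_field, slope_def_field]
    have hg0 : -(ε * (Real.exp (α * 0) - 1)) = 0 := by simp
    rw [hg0]
    have hden : (0:ℝ) < y - 0 := by linarith
    exact (div_le_div_iff_of_pos_right hden).2 hnum
  linarith [mul_pos hε0 hα0]
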